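/- arXiv:2103.12796 — 8 statements merged into one kernel-verified Lean document; each statement's English description precedes it below -/
import Mathlib

section
/- Let λ ∈ ℝ, let I ⊆ ℝ be an open interval, and let b : I → ℝ be a twice differentiable function with b(s) > 0 and b'(s) ≠ 2λ for all s ∈ I, satisfying the Schouten soliton ODE b(s)·b''(s) − (b'(s))² + 6λ·b'(s) − 8λ² = 0 on I. Then there exists a constant σ₀ ∈ ℝ such that (b'(s) − 4λ)² = σ₀ · b(s) · (b'(s) − 2λ) for all s ∈ I. -/
/-- (First integral of the Schouten soliton ODE, Lemma 3.2 of the paper.)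
If `b` is twice differentiable on an open interval `I`, positive, with `b' ≠ 2λ` on `I`, and
satisfies `b·b'' − (b')² + 6λ·b' − 8λ² = 0` on `I`, then there is a constant `σ₀` with
`(b' − 4λ)² = σ₀ · b · (b' − 2λ)` on `I`. -/
theorem stmt_0 (lam : ℝ) (I : Set ℝ) (hIopen : IsOpen I) (hIinterval : I.OrdConnected)
    (b b' b'' : ℝ → ℝ)
    (hb : ∀ s ∈ I, HasDerivAt b (b' s) s)
    (hb' : ∀ s ∈ I, HasDerivAt b' (b'' s) s)
    (hpos : ∀ s ∈ I, 0 < b s)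
    (hne : ∀ s ∈ I, b' s ≠ 2 * lam)
    (hode : ∀ s ∈ I, b s * b'' s - (b' s) ^ 2 + 6 * lam * b' s - 8 * lam ^ 2 = 0) :
    ∃ σ₀ : ℝ, ∀ s ∈ I, (b' s - 4 * lam) ^ 2 = σ₀ * (b s * (b' s - 2 * lam)) := by
  rcases I.eq_empty_or_nonempty with rfl | ⟨s₀, hs₀⟩
  · exact ⟨0, fun s hs => absurd hs (Set.notMem_empty s)⟩
  set F : ℝ → ℝ := fun s => (b' s - 4 * lam) ^ 2 with hF
  set G : ℝ → ℝ := fun s => b s * (b' s - 2 * lam) with hG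
  have hGne : ∀ s ∈ I, G s ≠ 0 := fun s hs =>
    mul_ne_zero (hpos s hs).ne' (sub_ne_zero.mpr (hne s hs))
  set h : ℝ → ℝ := fun s => F s / G s with hh
  have hderiv : ∀ s ∈ I, HasDerivAt h 0 s := by
    intro s hs
    have hFd : HasDerivAt F (2 * (b' s - 4 * lam) * b'' s) s := by
      have := ((hb' s hs).sub_const (4 * lam)).pow 2
      refine this.congr_deriv ?_
      ring
    have hGd : HasDerivAt G (b' s * (b' s - 2 * lam) + b s * b'' s) s :=
      (hb s hs).mul ((hb' s hs).sub_const (2 * lam))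
    have key : b s * b'' s = (b' s - 2 * lam) * (b' s - 4 * lam) := by
      have := hode s hs; nlinarith [this]
    have hq := hFd.div hGd (hGne s hs)
    refine hq.congr_deriv ?_
    rw [div_eq_zero_iff]
    left
    simp only [hF, hG]
    linear_combination (2 * (b' s - 4 * lam) * (b' s - 2 * lam) - (b' s - 4 * lam) ^ 2) * key
  have hconvex : Convex ℝ I := hIinterval.convex
  have hdiff : DifferentiableOn ℝ h I := fun s hs =>
    ((hderiv s hs).differentiableAt).differentiableWithinAt
  have hfd0 : ∀ s ∈ I, fderivWithin ℝ h I s = 0 := by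
    intro s hs
    have h0 : HasFDerivAt h (0 : ℝ →L[ℝ] ℝ) s := by
      have := (hderiv s hs).hasFDerivAt
      refine this.congr_fderiv ?_
      ext
      simp
    rw [fderivWithin_of_isOpen hIopen hs, h0.fderiv]
  refine ⟨h s₀, fun s hs => ?_⟩
  have hc : h s = h s₀ := hconvex.is_const_of_fderivWithin_eq_zero hdiff hfd0 hs hs₀
  have hfinal : F s = h s₀ * G s := by
    rw [← hc, hh]
    exact (div_mul_cancel₀ (F s) (hGne s hs)).symm
  exact hfinal
end

section
/- Let λ ∈ ℝ, let I ⊆ ℝ be an open interval, and let b : I → ℝ be a twice differentiable function with b(s) ≠ 0 and b'(s) ≠ 2λ for all s ∈ I. Then the function φ(s) = (b'(s) − 4λ)² / (b(s)·(b'(s) − 2λ)) is differentiable on I, and for all s ∈ I its derivative equals φ'(s) = [b'(s)·(b'(s) − 4λ) / (b(s)²·(b'(s) − 2λ)²)] · (b(s)·b''(s) − (b'(s) − 2λ)·(b'(s) − 4λ)). In particular, φ is constant on I whenever b satisfies b(s)·b''(s) − (b'(s))² + 6λ·b'(s) − 8λ² = 0 on I. -/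
/-- The quotient `φ = (b' − 4λ)² / (b·(b' − 2λ))` is differentiable with
derivative `φ' = [b'·(b' − 4λ)/(b²·(b' − 2λ)²)]·(b·b'' − (b' − 2λ)(b' − 4λ))`; in particular
`φ` is constant on `I` whenever `b` satisfies the Schouten soliton ODE. -/
theorem stmt_1 (lam : ℝ) (I : Set ℝ) (hIopen : IsOpen I) (hIinterval : I.OrdConnected)
    (b b' b'' : ℝ → ℝ)
    (hb : ∀ s ∈ I, HasDerivAt b (b' s) s)
    (hb' : ∀ s ∈ I, HasDerivAt b' (b'' s) s)
    (hbne : ∀ s ∈ I, b s ≠ 0)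
    (hne : ∀ s ∈ I, b' s ≠ 2 * lam) :
    (∀ s ∈ I, HasDerivAt (fun t => (b' t - 4 * lam) ^ 2 / (b t * (b' t - 2 * lam)))
      (b' s * (b' s - 4 * lam) / ((b s) ^ 2 * (b' s - 2 * lam) ^ 2) *
        (b s * b'' s - (b' s - 2 * lam) * (b' s - 4 * lam))) s) ∧
    ((∀ s ∈ I, b s * b'' s - (b' s) ^ 2 + 6 * lam * b' s - 8 * lam ^ 2 = 0) →
      ∃ c : ℝ, ∀ s ∈ I,
        (b' s - 4 * lam) ^ 2 / (b s * (b' s - 2 * lam)) = c) := by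
  have key : ∀ s ∈ I, HasDerivAt (fun t => (b' t - 4 * lam) ^ 2 / (b t * (b' t - 2 * lam)))
      (b' s * (b' s - 4 * lam) / ((b s) ^ 2 * (b' s - 2 * lam) ^ 2) *
        (b s * b'' s - (b' s - 2 * lam) * (b' s - 4 * lam))) s := by
    intro s hs
    have hB : b' s - 2 * lam ≠ 0 := sub_ne_zero.mpr (hne s hs)
    have hvne : b s * (b' s - 2 * lam) ≠ 0 := mul_ne_zero (hbne s hs) hB
    have hu : HasDerivAt (fun t => (b' t - 4 * lam) ^ 2)
        (2 * (b' s - 4 * lam) * b'' s) s := by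
      have := ((hb' s hs).sub_const (4 * lam)).pow 2
      exact this.congr_deriv (by simp)
    have hv : HasDerivAt (fun t => b t * (b' t - 2 * lam))
        (b' s * (b' s - 2 * lam) + b s * b'' s) s := by
      exact (hb s hs).mul ((hb' s hs).sub_const (2 * lam))
    have := hu.div hv hvne
    refine this.congr_deriv ?_
    have h1 : (b s) ^ 2 ≠ 0 := pow_ne_zero _ (hbne s hs)
    have h2 : (b' s - 2 * lam) ^ 2 ≠ 0 := pow_ne_zero _ hB
    rw [div_mul_eq_mul_div, div_eq_div_iff (pow_ne_zero _ hvne) (mul_ne_zero h1 h2)]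
    ring
  refine ⟨key, fun hODE => ?_⟩
  rcases Set.eq_empty_or_nonempty I with hI | ⟨s₀, hs₀⟩
  · exact ⟨0, by simp [hI]⟩
  refine ⟨(b' s₀ - 4 * lam) ^ 2 / (b s₀ * (b' s₀ - 2 * lam)), fun s hs => ?_⟩
  have hzero : ∀ s ∈ I, HasDerivAt
      (fun t => (b' t - 4 * lam) ^ 2 / (b t * (b' t - 2 * lam))) 0 s := by
    intro s hs
    have h0 : b s * b'' s - (b' s - 2 * lam) * (b' s - 4 * lam) = 0 := by
      have := hODE s hs; nlinarith [this]
    simpa [h0] using key s hs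
  have hconv : Convex ℝ I := convex_iff_ordConnected.mpr hIinterval
  have hdiff : DifferentiableOn ℝ
      (fun t => (b' t - 4 * lam) ^ 2 / (b t * (b' t - 2 * lam))) I :=
    fun x hx => ((hzero x hx).differentiableAt).differentiableWithinAt
  exact hconv.is_const_of_fderivWithin_eq_zero hdiff
    (fun x hx => by
      rw [fderivWithin_of_isOpen hIopen hx, (hzero x hx).hasFDerivAt.fderiv]
      ext
      simp) hs hs₀
end

section
/- Let λ ∈ ℝ, let I ⊆ ℝ be an open interval, and let b : I → ℝ be a twice differentiable function with b(s) > 0 for all s ∈ I, satisfying the Schouten soliton ODE b(s)·b''(s) − (b'(s))² + 6λ·b'(s) − 8λ² = 0 on I. Then the function u : I → ℝ defined by u(s) = b(s)·(b'(s) − 2λ) is differentiable on I and satisfies u'(s) = 2·u(s)² / b(s)² for all s ∈ I. -/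
/-- If `b > 0` satisfies the Schouten soliton ODE on `I`, then
`u = b·(b' − 2λ)` satisfies `u' = 2u²/b²` on `I`. -/
theorem stmt_2 (lam : ℝ) (I : Set ℝ) (hIopen : IsOpen I) (hIinterval : I.OrdConnected)
    (b b' b'' : ℝ → ℝ)
    (hb : ∀ s ∈ I, HasDerivAt b (b' s) s)
    (hb' : ∀ s ∈ I, HasDerivAt b' (b'' s) s)
    (hpos : ∀ s ∈ I, 0 < b s)
    (hode : ∀ s ∈ I, b s * b'' s - (b' s) ^ 2 + 6 * lam * b' s - 8 * lam ^ 2 = 0) :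
    ∀ s ∈ I, HasDerivAt (fun t => b t * (b' t - 2 * lam))
      (2 * (b s * (b' s - 2 * lam)) ^ 2 / (b s) ^ 2) s := by
  intro s hs
  have h : HasDerivAt (fun t => b t * (b' t - 2 * lam)) _ s := (hb s hs).mul ((hb' s hs).sub_const (2 * lam))
  convert h using 1
  have hbne : b s ≠ 0 := (hpos s hs).ne'
  have ho := hode s hs
  field_simp
  nlinarith [ho]
end

section
/- Let λ ∈ ℝ, let I ⊆ ℝ be an open interval, and let b : I → ℝ be a twice differentiable function with b(s) > 0 for all s ∈ I, satisfying the Schouten soliton ODE b(s)·b''(s) − (b'(s))² + 6λ·b'(s) − 8λ² = 0 on I. Then the function v : I → ℝ defined by v(s) = b(s)·(b'(s) − 4λ) is differentiable on I and satisfies v'(s) = (2·(b'(s) − λ) / b(s)) · v(s) for all s ∈ I. -/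
/-- If `b > 0` satisfies the Schouten soliton ODE on `I`, then
`v = b·(b' − 4λ)` satisfies `v' = (2(b' − λ)/b)·v` on `I`. -/
theorem stmt_3 (lam : ℝ) (I : Set ℝ) (hIopen : IsOpen I) (hIinterval : I.OrdConnected)
    (b b' b'' : ℝ → ℝ)
    (hb : ∀ s ∈ I, HasDerivAt b (b' s) s)
    (hb' : ∀ s ∈ I, HasDerivAt b' (b'' s) s)
    (hpos : ∀ s ∈ I, 0 < b s)
    (hode : ∀ s ∈ I, b s * b'' s - (b' s) ^ 2 + 6 * lam * b' s - 8 * lam ^ 2 = 0) :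
    ∀ s ∈ I, HasDerivAt (fun t => b t * (b' t - 4 * lam))
      ((2 * (b' s - lam) / b s) * (b s * (b' s - 4 * lam))) s := by
  intro s hs
  have h : HasDerivAt (fun t => b t * (b' t - 4 * lam)) (b' s * (b' s - 4 * lam) + b s * b'' s) s := (hb s hs).mul ((hb' s hs).sub_const (4 * lam))
  convert h using 1
  have hb0 := (hpos s hs).ne'
  have hode' := hode s hs
  have e : 2 * (b' s - lam) / b s * b s = 2 * (b' s - lam) := div_mul_cancel₀ _ hb0
  linear_combination (b' s - 4 * lam) * e - hode'
end

section
/- Let λ ∈ ℝ, let I ⊆ ℝ be an open interval, and let b : I → ℝ be a twice continuously differentiable function with b(s) > 0 for all s ∈ I, satisfying the Schouten soliton ODE b(s)·b''(s) − (b'(s))² + 6λ·b'(s) − 8λ² = 0 on I. If there exists s₀ ∈ I with b'(s₀) = 2λ, then b'(s) = 2λ for all s ∈ I. -/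
open Set Real

/-- Auxiliary lemma: propagation of `b' = 2λ` along a compact subinterval, in both
directions, via ODE uniqueness applied to `u = b' - 2λ` satisfying `u' = ((b'-4λ)/b)·u`. -/
lemma schouten_aux (lam : ℝ) (I : Set ℝ) (b b' b'' : ℝ → ℝ)
    (hb : ∀ s ∈ I, HasDerivAt b (b' s) s)
    (hb' : ∀ s ∈ I, HasDerivAt b' (b'' s) s)
    (hpos : ∀ s ∈ I, 0 < b s)
    (hode : ∀ s ∈ I, b s * b'' s - (b' s) ^ 2 + 6 * lam * b' s - 8 * lam ^ 2 = 0)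
    (a c : ℝ) (hac : a ≤ c) (hsub : Icc a c ⊆ I) :
    (b' a = 2 * lam → ∀ t ∈ Icc a c, b' t = 2 * lam) ∧
    (b' c = 2 * lam → ∀ t ∈ Icc a c, b' t = 2 * lam) := by
  -- continuity facts on the compact interval
  have hbc : ContinuousOn b (Icc a c) := fun t ht => ((hb t (hsub ht)).continuousAt).continuousWithinAt
  have hb'c : ContinuousOn b' (Icc a c) := fun t ht => ((hb' t (hsub ht)).continuousAt).continuousWithinAt
  have hbne : ∀ t ∈ Icc a c, b t ≠ 0 := fun t ht => (hpos t (hsub ht)).ne'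
  have hgc : ContinuousOn (fun t => (b' t - 4 * lam) / b t) (Icc a c) :=
    (hb'c.sub continuousOn_const).div hbc hbne
  obtain ⟨C, hC⟩ := isCompact_Icc.exists_bound_of_continuousOn hgc
  -- clamp function
  set cl : ℝ → ℝ := fun t => min (max t a) c with hcl
  have hclmem : ∀ t, cl t ∈ Icc a c := fun t =>
    ⟨le_min (le_max_right t a) hac, min_le_right _ _⟩
  have hcleq : ∀ t ∈ Icc a c, cl t = t := by
    intro t ht
    simp only [hcl]
    rw [max_eq_left ht.1, min_eq_left ht.2]
  -- the vector field
  set v : ℝ → ℝ → ℝ := fun t x => ((b' (cl t) - 4 * lam) / b (cl t)) * x with hv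
  set K : NNReal := ⟨max C 0, le_max_right _ _⟩ with hK
  have hlip : ∀ t, LipschitzWith K (v t) := by
    intro t
    apply LipschitzWith.of_dist_le_mul
    intro x y
    simp only [hv, Real.dist_eq, ← mul_sub, abs_mul]
    have h1 : |(b' (cl t) - 4 * lam) / b (cl t)| ≤ C := hC _ (hclmem t)
    have h2 : (C : ℝ) ≤ max C 0 := le_max_left _ _
    have : (K : ℝ) = max C 0 := rfl
    nlinarith [abs_nonneg (x - y), abs_nonneg ((b' (cl t) - 4 * lam) / b (cl t))]
  -- the two solutions: u = b' - 2λ and 0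
  set f : ℝ → ℝ := fun t => b' t - 2 * lam with hf
  have hfc : ContinuousOn f (Icc a c) := hb'c.sub continuousOn_const
  have hfd : ∀ t ∈ Icc a c, HasDerivAt f (v t (f t)) t := by
    intro t ht
    have hder : HasDerivAt f (b'' t) t := (hb' t (hsub ht)).sub_const _
    have heq : v t (f t) = b'' t := by
      simp only [hv, hf, hcleq t ht]
      have h := hode t (hsub ht)
      have hb0 : b t ≠ 0 := hbne t ht
      field_simp
      nlinarith [h]
    rwa [heq]
  have hzc : ContinuousOn (fun _ : ℝ => (0 : ℝ)) (Icc a c) := continuousOn_const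
  have hzd : ∀ t : ℝ, HasDerivAt (fun _ : ℝ => (0 : ℝ)) (v t 0) t := by
    intro t
    simp only [hv, mul_zero]
    exact hasDerivAt_const t 0
  constructor
  · intro ha0 t ht
    have := ODE_solution_unique_of_mem_Icc_right (v := v) (s := fun _ => (univ : Set ℝ))
      (K := K) (f := f) (g := fun _ => (0 : ℝ)) (a := a) (b := c)
      (fun t _ => (hlip t).lipschitzOnWith)
      hfc (fun t' ht' => (hfd t' (Ico_subset_Icc_self ht')).hasDerivWithinAt)
      (fun _ _ => trivial)
      hzc (fun t' _ => (hzd t').hasDerivWithinAt) (fun _ _ => trivial)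
      (by simp [hf, ha0]) ht
    have : b' t - 2 * lam = 0 := this
    linarith
  · intro hc0 t ht
    have := ODE_solution_unique_of_mem_Icc_left (v := v) (s := fun _ => (univ : Set ℝ))
      (K := K) (f := f) (g := fun _ => (0 : ℝ)) (a := a) (b := c)
      (fun t _ => (hlip t).lipschitzOnWith)
      hfc (fun t' ht' => (hfd t' (Ioc_subset_Icc_self ht')).hasDerivWithinAt)
      (fun _ _ => trivial)
      hzc (fun t' _ => (hzd t').hasDerivWithinAt) (fun _ _ => trivial)
      (by simp [hf, hc0]) ht
    have : b' t - 2 * lam = 0 := this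
    linarith

/-- For a positive C² solution of the Schouten soliton ODE on an open
interval, if `b' = 2λ` at one point, then `b' ≡ 2λ` on the whole interval. -/
theorem stmt_4 (lam : ℝ) (I : Set ℝ) (hIopen : IsOpen I) (hIinterval : I.OrdConnected)
    (b b' b'' : ℝ → ℝ)
    (hb : ∀ s ∈ I, HasDerivAt b (b' s) s)
    (hb' : ∀ s ∈ I, HasDerivAt b' (b'' s) s)
    (hb'' : ContinuousOn b'' I)
    (hpos : ∀ s ∈ I, 0 < b s)
    (hode : ∀ s ∈ I, b s * b'' s - (b' s) ^ 2 + 6 * lam * b' s - 8 * lam ^ 2 = 0)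
    (s₀ : ℝ) (hs₀ : s₀ ∈ I) (h2 : b' s₀ = 2 * lam) :
    ∀ s ∈ I, b' s = 2 * lam := by
  intro s hs
  rcases le_total s₀ s with h | h
  · exact (schouten_aux lam I b b' b'' hb hb' hpos hode s₀ s h
      (hIinterval.out hs₀ hs)).1 h2 s ⟨h, le_rfl⟩
  · exact (schouten_aux lam I b b' b'' hb hb' hpos hode s s₀ h
      (hIinterval.out hs hs₀)).2 h2 s ⟨le_rfl, h⟩
end

section
/- Let λ ∈ ℝ, let I ⊆ ℝ be an open interval, and let b : I → ℝ be a twice continuously differentiable function with b(s) > 0 for all s ∈ I, satisfying the Schouten soliton ODE b(s)·b''(s) − (b'(s))² + 6λ·b'(s) − 8λ² = 0 on I. If there exists s₀ ∈ I with b'(s₀) = 4λ, then b'(s) = 4λ for all s ∈ I. -/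
open Set Metric Real

/-- For a positive C² solution of the Schouten soliton ODE on an open
interval, if `b' = 4λ` at one point, then `b' ≡ 4λ` on the whole interval. -/
theorem stmt_5 (lam : ℝ) (I : Set ℝ) (hIopen : IsOpen I) (hIinterval : I.OrdConnected)
    (b b' b'' : ℝ → ℝ)
    (hb : ∀ s ∈ I, HasDerivAt b (b' s) s)
    (hb' : ∀ s ∈ I, HasDerivAt b' (b'' s) s)
    (hb'' : ContinuousOn b'' I)
    (hpos : ∀ s ∈ I, 0 < b s)
    (hode : ∀ s ∈ I, b s * b'' s - (b' s) ^ 2 + 6 * lam * b' s - 8 * lam ^ 2 = 0)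
    (s₀ : ℝ) (hs₀ : s₀ ∈ I) (h4 : b' s₀ = 4 * lam) :
    ∀ s ∈ I, b' s = 4 * lam := by
  intro s hs
  set p := min s₀ s with hp
  set q := max s₀ s with hq
  have hpq : p ≤ q := min_le_max
  have hPQ : Icc p q ⊆ I := by
    intro x hx
    rcases le_total s₀ s with h | h
    · exact hIinterval.out hs₀ hs (by simpa [hp, hq, min_eq_left h, max_eq_right h] using hx)
    · exact hIinterval.out hs hs₀ (by simpa [hp, hq, min_eq_right h, max_eq_left h] using hx)
  obtain ⟨ε, hε, hthick⟩ := (isCompact_Icc (a := p) (b := q)).exists_cthickening_subset_open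
    hIopen hPQ
  set a := p - ε with ha
  set c := q + ε with hc
  have hac : a < c := by dsimp [a, c]; linarith
  have hKI : Icc a c ⊆ I := by
    intro x hx
    apply hthick
    rcases le_total x p with h | h
    · exact mem_cthickening_of_dist_le x p ε _ (left_mem_Icc.2 hpq)
        (by rw [Real.dist_eq, abs_of_nonpos (by linarith [hx.1])]; linarith [hx.1])
    · rcases le_total x q with h' | h'
      · exact mem_cthickening_of_dist_le x x ε _ ⟨h, h'⟩ (by simp [hε.le])
      · exact mem_cthickening_of_dist_le x q ε _ (right_mem_Icc.2 hpq)
          (by rw [Real.dist_eq, abs_of_nonneg (by linarith)]; linarith [hx.2])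
  have hs₀' : s₀ ∈ Ioo a c := by
    constructor
    · dsimp [a]; linarith [min_le_left s₀ s]
    · dsimp [c]; linarith [le_max_left s₀ s]
  have hs' : s ∈ Ioo a c := by
    constructor
    · dsimp [a]; linarith [min_le_right s₀ s]
    · dsimp [c]; linarith [le_max_right s₀ s]
  -- continuity of b and b' on the compact interval
  have hbc : ContinuousOn b (Icc a c) :=
    fun x hx => ((hb x (hKI hx)).continuousAt).continuousWithinAt
  have hb'c : ContinuousOn b' (Icc a c) :=
    fun x hx => ((hb' x (hKI hx)).continuousAt).continuousWithinAt
  -- lower bound m for b on Icc a c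
  obtain ⟨xm, hxm, hmin⟩ := isCompact_Icc.exists_isMinOn (Set.nonempty_Icc.2 hac.le) hbc
  set m := b xm with hm
  have hm0 : 0 < m := hpos xm (hKI hxm)
  have hbm : ∀ x ∈ Icc a c, m ≤ b x := fun x hx => hmin hx
  -- upper bound R for |b'| on Icc a c
  obtain ⟨xM, hxM, hmax⟩ := isCompact_Icc.exists_isMaxOn (Set.nonempty_Icc.2 hac.le)
    (hb'c.abs)
  set R := max (|b' xM|) (|4 * lam|) with hR
  have hR0 : 0 ≤ R := le_trans (abs_nonneg _) (le_max_left _ _)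
  have hb'R : ∀ x ∈ Icc a c, b' x ∈ Icc (-R) R := by
    intro x hx
    have : |b' x| ≤ R := le_trans (hmax hx) (le_max_left _ _)
    exact ⟨neg_le_of_abs_le this, le_of_abs_le this⟩
  have h4R : (4 : ℝ) * lam ∈ Icc (-R) R := by
    have : |4 * lam| ≤ R := le_max_right _ _
    exact ⟨neg_le_of_abs_le this, le_of_abs_le this⟩
  -- the vector field
  set v : ℝ → ℝ → ℝ := fun t x => (x ^ 2 - 6 * lam * x + 8 * lam ^ 2) / max (b t) m with hv
  set K : NNReal := ⟨(2 * R + 6 * |lam|) / m, by positivity⟩ with hKdef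
  have hlip : ∀ t, LipschitzOnWith K (v t) (Icc (-R) R) := by
    intro t
    rw [lipschitzOnWith_iff_dist_le_mul]
    intro x hx y hy
    have hD : m ≤ max (b t) m := le_max_right _ _
    have hD0 : 0 < max (b t) m := lt_of_lt_of_le hm0 hD
    rw [Real.dist_eq, Real.dist_eq]
    have hsub : v t x - v t y = (x + y - 6 * lam) * (x - y) / max (b t) m := by
      rw [hv]; field_simp; ring
    rw [hsub, abs_div, abs_mul, abs_of_pos hD0]
    rw [div_le_iff₀ hD0]
    have h1 : |x + y - 6 * lam| ≤ 2 * R + 6 * |lam| := by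
      calc |x + y - 6 * lam| ≤ |x| + |y| + |6 * lam| := by
            apply (abs_sub _ _).trans; gcongr; exact abs_add_le _ _
        _ ≤ R + R + 6 * |lam| := by
            rw [abs_mul, abs_of_nonneg (by norm_num : (0:ℝ) ≤ 6)]
            gcongr
            · exact abs_le.2 ⟨hx.1, hx.2⟩
            · exact abs_le.2 ⟨hy.1, hy.2⟩
        _ = 2 * R + 6 * |lam| := by ring
    calc |x + y - 6 * lam| * |x - y| ≤ (2 * R + 6 * |lam|) * |x - y| := by
          gcongr
      _ = ((2 * R + 6 * |lam|) / m) * |x - y| * m := by field_simp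
      _ ≤ (K : ℝ) * |x - y| * max (b t) m := by
          have hKc : (K : ℝ) = (2 * R + 6 * |lam|) / m := rfl
          rw [hKc]
          gcongr
  -- b' solves the ODE on Ioo a c
  have hf' : ∀ t ∈ Ioo a c, HasDerivAt b' (v t (b' t)) t := by
    intro t ht
    have htI : t ∈ I := hKI (Ioo_subset_Icc_self ht)
    have hbt : max (b t) m = b t := max_eq_left (hbm t (Ioo_subset_Icc_self ht))
    have hbt0 : b t ≠ 0 := (hpos t htI).ne'
    have : v t (b' t) = b'' t := by
      rw [hv]
      dsimp only
      rw [hbt, div_eq_iff hbt0]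
      have := hode t htI
      linarith [this]
    rw [this]
    exact hb' t htI
  -- constant 4λ solves the ODE
  have hg' : ∀ t ∈ Ioo a c, HasDerivAt (fun _ : ℝ => 4 * lam) (v t (4 * lam)) t := by
    intro t ht
    have : v t (4 * lam) = 0 := by
      rw [hv]; dsimp only
      have : (4 * lam) ^ 2 - 6 * lam * (4 * lam) + 8 * lam ^ 2 = 0 := by ring
      rw [this, zero_div]
    rw [this]
    exact hasDerivAt_const t _
  have := ODE_solution_unique_of_mem_Icc (v := v) (s := fun _ => Icc (-R) R) (K := K)
    (fun t _ => hlip t) hs₀'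
    (hb'c) hf' (fun t ht => hb'R t (Ioo_subset_Icc_self ht))
    (continuousOn_const) hg' (fun t ht => h4R)
    h4
  exact this (Ioo_subset_Icc_self hs')
end

section
/- Let λ ∈ ℝ, let I ⊆ ℝ be an open interval, and let b : I → ℝ be a twice continuously differentiable function with b(s) > 0 for all s ∈ I, satisfying the Schouten soliton ODE b(s)·b''(s) − (b'(s))² + 6λ·b'(s) − 8λ² = 0 on I. If there exists s₀ ∈ I with b''(s₀) = 0, then b' is constant on I, and its constant value is either 2λ or 4λ. -/
open Set

/-- For a positive C² solution of the Schouten soliton ODE on an open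
interval, if `b''` vanishes at one point, then `b'` is constant on the interval, with
constant value either `2λ` or `4λ`. -/
theorem stmt_6 (lam : ℝ) (I : Set ℝ) (hIopen : IsOpen I) (hIinterval : I.OrdConnected)
    (b b' b'' : ℝ → ℝ)
    (hb : ∀ s ∈ I, HasDerivAt b (b' s) s)
    (hb' : ∀ s ∈ I, HasDerivAt b' (b'' s) s)
    (hb'' : ContinuousOn b'' I)
    (hpos : ∀ s ∈ I, 0 < b s)
    (hode : ∀ s ∈ I, b s * b'' s - (b' s) ^ 2 + 6 * lam * b' s - 8 * lam ^ 2 = 0)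
    (s₀ : ℝ) (hs₀ : s₀ ∈ I) (h0 : b'' s₀ = 0) :
    (∀ s ∈ I, b' s = 2 * lam) ∨ (∀ s ∈ I, b' s = 4 * lam) := by
  classical
  set g : ℝ → ℝ := fun t => (b' t - 2 * lam) * (b' t - 4 * lam) with hg_def
  have hgI : ∀ t ∈ I, g t = b t * b'' t := by
    intro t ht
    have := hode t ht
    simp only [hg_def]
    nlinarith [this]
  -- g vanishes everywhere on I
  have hg0 : ∀ s ∈ I, g s = 0 := by
    intro s hs
    have hmI : min s₀ s ∈ I := by
      rcases le_total s₀ s with h | h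
      · rwa [min_eq_left h]
      · rwa [min_eq_right h]
    have hMI : max s₀ s ∈ I := by
      rcases le_total s₀ s with h | h
      · rwa [max_eq_right h]
      · rwa [max_eq_left h]
    obtain ⟨ε, hε, hball⟩ := Metric.isOpen_iff.mp hIopen _ hmI
    obtain ⟨δ, hδ, hball'⟩ := Metric.isOpen_iff.mp hIopen _ hMI
    set a : ℝ := min s₀ s - ε / 2 with ha_def
    set c : ℝ := max s₀ s + δ / 2 with hc_def
    clear_value a c
    have haI : a ∈ I := by
      apply hball
      simp only [Metric.mem_ball, Real.dist_eq, ha_def]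
      rw [abs_of_nonpos (by linarith)]
      linarith
    have hcI : c ∈ I := by
      apply hball'
      simp only [Metric.mem_ball, Real.dist_eq, hc_def]
      rw [abs_of_nonneg (by linarith)]
      linarith
    have hIcc : Icc a c ⊆ I := hIinterval.out haI hcI
    have hs₀ab : s₀ ∈ Ioo a c := by
      constructor
      · have : min s₀ s ≤ s₀ := min_le_left _ _
        linarith
      · have : s₀ ≤ max s₀ s := le_max_left _ _
        linarith
    have hsab : s ∈ Ioo a c := by
      constructor
      · have : min s₀ s ≤ s := min_le_right _ _
        linarith
      · have : s ≤ max s₀ s := le_max_right _ _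
        linarith
    -- the linear coefficient
    set h : ℝ → ℝ := fun t => (2 * b' t - 6 * lam) / b t with hh_def
    have hconth : ContinuousOn h (Icc a c) := by
      intro t ht
      have htI : t ∈ I := hIcc ht
      have hca : ContinuousAt h t :=
        ((continuousAt_const.mul (hb' t htI).continuousAt).sub continuousAt_const).div
          (hb t htI).continuousAt (ne_of_gt (hpos t htI))
      exact hca.continuousWithinAt
    obtain ⟨C, hC⟩ := isCompact_Icc.exists_bound_of_continuousOn hconth
    set K : NNReal := ⟨max C 0, le_max_right _ _⟩ with hK_def
    set v : ℝ → ℝ → ℝ := fun t x => (if t ∈ Ioo a c then h t else 0) * x with hv_def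
    have hv : ∀ t, LipschitzOnWith K (v t) univ := by
      intro t
      apply LipschitzWith.lipschitzOnWith
      apply LipschitzWith.of_dist_le_mul
      intro x y
      simp only [hv_def, Real.dist_eq, ← mul_sub, abs_mul]
      have hb1 : |if t ∈ Ioo a c then h t else 0| ≤ max C 0 := by
        split_ifs with ht
        · calc |h t| ≤ C := by simpa using hC t (Ioo_subset_Icc_self ht)
            _ ≤ max C 0 := le_max_left _ _
        · simp
      have : (K : ℝ) = max C 0 := rfl
      rw [this]
      exact mul_le_mul_of_nonneg_right hb1 (abs_nonneg _)
    have hf : ∀ t ∈ Ioo a c, HasDerivAt g (v t (g t)) t ∧ g t ∈ univ := by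
      intro t ht
      have htI : t ∈ I := hIcc (Ioo_subset_Icc_self ht)
      refine ⟨?_, mem_univ _⟩
      have hd : HasDerivAt g (b'' t * (b' t - 4 * lam) + (b' t - 2 * lam) * b'' t) t :=
        ((hb' t htI).sub_const _).mul ((hb' t htI).sub_const _)
      convert hd using 1
      have hbne : b t ≠ 0 := ne_of_gt (hpos t htI)
      simp only [hv_def, if_pos ht, hh_def, hgI t htI]
      field_simp
      ring
    have hzero : ∀ t ∈ Ioo a c, HasDerivAt (fun _ : ℝ => (0:ℝ)) (v t 0) t ∧ (0:ℝ) ∈ univ := by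
      intro t ht
      refine ⟨?_, mem_univ _⟩
      have : v t 0 = 0 := by simp [hv_def]
      rw [this]
      exact hasDerivAt_const t 0
    have heq : g s₀ = (fun _ : ℝ => (0:ℝ)) s₀ := by
      simp [hgI s₀ hs₀, h0]
    have := ODE_solution_unique_of_mem_Ioo (fun t _ => hv t) hs₀ab hf hzero heq hsab
    simpa using this
  -- now conclude via IVT
  have hprod : ∀ s ∈ I, b' s = 2 * lam ∨ b' s = 4 * lam := by
    intro s hs
    rcases mul_eq_zero.mp (hg0 s hs) with h | h
    · left; linarith
    · right; linarith
  have hcont : ∀ t ∈ I, ContinuousAt b' t := fun t ht => (hb' t ht).continuousAt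
  rcases hprod s₀ hs₀ with h2 | h4
  · left
    intro s hs
    by_contra hne
    have hs4 : b' s = 4 * lam := (hprod s hs).resolve_left hne
    have hlam : lam ≠ 0 := by
      intro h; apply hne; rw [hs4, h]; ring
    have hsub : uIcc s₀ s ⊆ I := hIinterval.uIcc_subset hs₀ hs
    have hcb' : ContinuousOn b' (uIcc s₀ s) := fun t ht =>
      (hcont t (hsub ht)).continuousWithinAt
    have hmid : (3 * lam) ∈ uIcc (b' s₀) (b' s) := by
      rw [h2, hs4]
      rcases le_total lam 0 with h | h
      · exact mem_uIcc.mpr (Or.inr ⟨by linarith, by linarith⟩)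
      · exact mem_uIcc.mpr (Or.inl ⟨by linarith, by linarith⟩)
    obtain ⟨t, ht, hbt⟩ := intermediate_value_uIcc hcb' hmid
    rcases hprod t (hsub ht) with h | h <;> rw [hbt] at h <;>
      exact hlam (by linarith)
  · right
    intro s hs
    by_contra hne
    have hs2 : b' s = 2 * lam := (hprod s hs).resolve_right hne
    have hlam : lam ≠ 0 := by
      intro h; apply hne; rw [hs2, h]; ring
    have hsub : uIcc s₀ s ⊆ I := hIinterval.uIcc_subset hs₀ hs
    have hcb' : ContinuousOn b' (uIcc s₀ s) := fun t ht =>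
      (hcont t (hsub ht)).continuousWithinAt
    have hmid : (3 * lam) ∈ uIcc (b' s₀) (b' s) := by
      rw [h4, hs2]
      rcases le_total lam 0 with h | h
      · exact mem_uIcc.mpr (Or.inl ⟨by linarith, by linarith⟩)
      · exact mem_uIcc.mpr (Or.inr ⟨by linarith, by linarith⟩)
    obtain ⟨t, ht, hbt⟩ := intermediate_value_uIcc hcb' hmid
    rcases hprod t (hsub ht) with h | h <;> rw [hbt] at h <;>
      exact hlam (by linarith)
end

section
/- Let V be a real inner product space of finite dimension n ≥ 2, let A : V → V be a self-adjoint linear operator, and let v ∈ V be a nonzero vector with A v = 0. Then (tr A)² = (n − 1) · tr(A²) if and only if there exists μ ∈ ℝ such that A = μ · P, where P is the orthogonal projection of V onto the orthogonal complement of the span of v; in that case μ = tr A / (n − 1). -/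
open Finset in
/-- Trace of a map diagonal in an orthonormal basis. -/
lemma trace_eq_sum_of_diag {V : Type*} [NormedAddCommGroup V] [InnerProductSpace ℝ V]
    [FiniteDimensional ℝ V] {ι : Type*} [Fintype ι] [DecidableEq ι]
    (b : OrthonormalBasis ι ℝ V) (T : V →ₗ[ℝ] V) (c : ι → ℝ) (h : ∀ i, T (b i) = c i • b i) :
    LinearMap.trace ℝ V T = ∑ i, c i := by
  rw [LinearMap.trace_eq_matrix_trace ℝ b.toBasis, Matrix.trace]
  refine Finset.sum_congr rfl fun i _ => ?_
  simp [LinearMap.toMatrix_apply, OrthonormalBasis.coe_toBasis, h i]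

open Finset in
lemma aux_alg {n : ℕ} (hn : 2 ≤ n) (l : Fin n → ℝ) (i0 : Fin n) (h0 : l i0 = 0) :
    ((∑ i, l i) ^ 2 = ((n : ℝ) - 1) * ∑ i, (l i) ^ 2) ↔ ∃ μ : ℝ, ∀ i, i ≠ i0 → l i = μ := by
  have hm : (0 : ℝ) < (n : ℝ) - 1 := by
    have : (2 : ℝ) ≤ (n : ℝ) := by exact_mod_cast hn
    linarith
  set m : ℝ := (n : ℝ) - 1 with hmdef
  set s : ℝ := ∑ i, l i with hs
  have hcard : ((Finset.univ.erase i0).card : ℝ) = m := by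
    rw [Finset.card_erase_of_mem (Finset.mem_univ _)]
    simp only [Finset.card_univ, Fintype.card_fin]
    rw [Nat.cast_sub (by omega)]
    simp [hmdef]
  have hsum1 : ∑ i ∈ Finset.univ.erase i0, l i = s := by
    rw [hs, ← Finset.add_sum_erase _ l (Finset.mem_univ i0), h0, zero_add]
  have hsum2 : ∑ i ∈ Finset.univ.erase i0, (l i) ^ 2 = ∑ i, (l i) ^ 2 := by
    rw [← Finset.add_sum_erase _ (fun i => (l i) ^ 2) (Finset.mem_univ i0), h0]
    ring_nf
  set μ : ℝ := s / m with hμdef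
  have key : ∑ i ∈ Finset.univ.erase i0, (l i - μ) ^ 2
      = (m * (∑ i, (l i) ^ 2) - s ^ 2) / m := by
    have expand : ∀ i ∈ Finset.univ.erase i0,
        (l i - μ) ^ 2 = (l i) ^ 2 - (2 * μ) * (l i) + μ ^ 2 := fun i _ => by ring
    rw [Finset.sum_congr rfl expand, Finset.sum_add_distrib, Finset.sum_sub_distrib,
      ← Finset.mul_sum, hsum1, hsum2, Finset.sum_const, nsmul_eq_mul, hcard, hμdef]
    field_simp
    ring
  constructor
  · intro h
    refine ⟨μ, fun i hi => ?_⟩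
    have hz : ∑ i ∈ Finset.univ.erase i0, (l i - μ) ^ 2 = 0 := by
      rw [key, h]; field_simp; ring
    have := (Finset.sum_eq_zero_iff_of_nonneg (fun i _ => sq_nonneg (l i - μ))).mp hz i
      (Finset.mem_erase.mpr ⟨hi, Finset.mem_univ i⟩)
    have h2 : l i - μ = 0 := by
      exact pow_eq_zero_iff (n := 2) (by norm_num) |>.mp this
    linarith
  · rintro ⟨μ', hμ'⟩
    have h1 : s = m * μ' := by
      rw [← hsum1, Finset.sum_congr rfl (fun i hi => hμ' i (Finset.mem_erase.mp hi).1),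
        Finset.sum_const, nsmul_eq_mul, hcard]
    have h2 : ∑ i, (l i) ^ 2 = m * μ' ^ 2 := by
      rw [← hsum2, Finset.sum_congr rfl (fun i hi => by rw [hμ' i (Finset.mem_erase.mp hi).1]),
        Finset.sum_const, nsmul_eq_mul, hcard]
    rw [h1, h2]
    ring

/-- Equality case of Statement 10: for a self-adjoint endomorphism `A`
with `A v = 0`, `v ≠ 0`, on an `n`-dimensional real inner product space (`n ≥ 2`),
`(tr A)² = (n − 1)·tr(A²)` iff `A = μ·P` for some `μ ∈ ℝ`, where `P` is the orthogonal
projection onto `(span v)ᗮ`; and in that case `μ = tr A / (n − 1)`. -/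
theorem stmt_11 (V : Type*) [NormedAddCommGroup V] [InnerProductSpace ℝ V]
    [FiniteDimensional ℝ V] (hn : 2 ≤ Module.finrank ℝ V)
    (A : V →ₗ[ℝ] V) (hA : A.IsSymmetric) (v : V) (hv : v ≠ 0) (hAv : A v = 0) :
    ((LinearMap.trace ℝ V A) ^ 2
        = ((Module.finrank ℝ V : ℝ) - 1) * LinearMap.trace ℝ V (A ∘ₗ A) ↔
      ∃ μ : ℝ, ∀ w : V, A w = μ • ((Submodule.orthogonalProjectionOnto (ℝ ∙ v)ᗮ w : V))) ∧
    (∀ μ : ℝ, (∀ w : V, A w = μ • ((Submodule.orthogonalProjectionOnto (ℝ ∙ v)ᗮ w : V))) →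
      μ = LinearMap.trace ℝ V A / ((Module.finrank ℝ V : ℝ) - 1)) := by
  set n := Module.finrank ℝ V with hndef
  have hrank : Module.finrank ℝ V = n := rfl
  have hm1 : ((n : ℝ) - 1) ≠ 0 := by
    have : (2 : ℝ) ≤ (n : ℝ) := by exact_mod_cast hn
    linarith
  -- the projection as a linear map
  set Pl : V →ₗ[ℝ] V :=
    (ℝ ∙ v)ᗮ.subtype ∘ₗ (Submodule.orthogonalProjectionOnto (ℝ ∙ v)ᗮ).toLinearMap with hPl
  have hPlapp : ∀ w : V, Pl w = (Submodule.orthogonalProjectionOnto (ℝ ∙ v)ᗮ w : V) := fun w => rfl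
  -- finrank of the orthogonal complement
  have hfr : Module.finrank ℝ (ℝ ∙ v)ᗮ = n - 1 := by
    have h1 : Module.finrank ℝ (ℝ ∙ v) = 1 := finrank_span_singleton hv
    have h2 := Submodule.finrank_add_finrank_orthogonal (K := (ℝ ∙ v))
    omega
  have hfrR : ((Module.finrank ℝ (ℝ ∙ v)ᗮ : ℝ)) = (n : ℝ) - 1 := by
    rw [hfr, Nat.cast_sub (by omega)]; simp
  -- second part: trace computation given A = μ • P
  have part2 : ∀ μ : ℝ, (∀ w : V, A w = μ • ((Submodule.orthogonalProjectionOnto (ℝ ∙ v)ᗮ w : V))) →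
      LinearMap.trace ℝ V A = μ * ((n : ℝ) - 1) := by
    intro μ hμ
    have hAeq : A = μ • Pl := LinearMap.ext fun w => by rw [LinearMap.smul_apply, hPlapp]; exact hμ w
    have hproj : LinearMap.IsProj (ℝ ∙ v)ᗮ Pl :=
      ⟨fun x => (Submodule.orthogonalProjectionOnto _ x).2,
        fun x hx => Submodule.starProjection_eq_self_iff.mpr hx⟩
    have htrP : LinearMap.trace ℝ V Pl = (n : ℝ) - 1 := by
      rw [hproj.trace, hfrR]
    rw [hAeq, map_smul, smul_eq_mul, htrP]
  refine ⟨?_, fun μ hμ => by rw [part2 μ hμ]; field_simp⟩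
  -- eigenbasis setup
  set b := hA.eigenvectorBasis hrank with hb
  set l := hA.eigenvalues hrank with hl
  have happ : ∀ i, A (b i) = l i • b i := fun i => by
    exact_mod_cast hA.apply_eigenvectorBasis hrank i
  have htrA : LinearMap.trace ℝ V A = ∑ i, l i := trace_eq_sum_of_diag b A l happ
  have htrAA : LinearMap.trace ℝ V (A ∘ₗ A) = ∑ i, (l i) ^ 2 := by
    refine trace_eq_sum_of_diag b _ (fun i => (l i) ^ 2) fun i => ?_
    simp [happ i, map_smul, smul_smul, sq]
  -- the coordinates of v
  have hcl : ∀ i, l i * b.repr v i = 0 := by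
    intro i
    have h1 := hA (b i) v
    rw [hAv, inner_zero_right, happ i, real_inner_smul_left] at h1
    rw [OrthonormalBasis.repr_apply_apply]
    exact h1
  obtain ⟨i0, hi0⟩ : ∃ i, b.repr v i ≠ 0 := by
    by_contra h
    push_neg at h
    apply hv
    have : b.repr v = 0 := by
      ext i
      exact h i
    simpa using b.repr.map_eq_zero_iff.mp this
  have hl0 : l i0 = 0 := by
    have := hcl i0
    rcases mul_eq_zero.mp this with h | h
    · exact h
    · exact absurd h hi0
  constructor
  · -- forward direction
    rw [htrA, htrAA]
    intro h
    obtain ⟨μ, hμ⟩ := (aux_alg hn l i0 hl0).mp h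
    by_cases hμ0 : μ = 0
    · refine ⟨0, fun w => ?_⟩
      have hA0 : A = 0 := b.toBasis.ext fun i => by
        rcases eq_or_ne i i0 with rfl | hi
        · simp [happ i, hl0]
        · simp [happ i, hμ i hi, hμ0]
      simp [hA0]
    · -- all coordinates of v except i0 vanish
      have hcv : ∀ i, i ≠ i0 → b.repr v i = 0 := by
        intro i hi
        have := hcl i
        rw [hμ i hi] at this
        exact (mul_eq_zero.mp this).resolve_left hμ0
      have hveq : v = b.repr v i0 • b i0 := by
        conv_lhs => rw [← b.sum_repr v]
        rw [Finset.sum_eq_single i0 (fun i _ hi => by rw [hcv i hi, zero_smul])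
          (fun h => absurd (Finset.mem_univ i0) h)]
      have hspan : (ℝ ∙ v) = ℝ ∙ (b i0) := by
        rw [hveq]
        exact Submodule.span_singleton_smul_eq (isUnit_iff_ne_zero.mpr hi0) _
      refine ⟨μ, fun w => ?_⟩
      have hAeq : A = μ • Pl := by
        refine b.toBasis.ext fun i => ?_
        rw [LinearMap.smul_apply, OrthonormalBasis.coe_toBasis, hPlapp]
        rcases eq_or_ne i i0 with rfl | hi
        · rw [happ i, hl0, zero_smul]
          have hmem : b i ∈ ((ℝ ∙ v)ᗮ)ᗮ :=
            (ℝ ∙ v).le_orthogonal_orthogonal (by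
              rw [hspan]; exact Submodule.mem_span_singleton_self _)
          rw [Submodule.orthogonalProjectionOnto_apply_of_mem_orthogonal hmem]
          simp
        · rw [happ i, hμ i hi]
          have hmem : b i ∈ (ℝ ∙ v)ᗮ := by
            rw [hspan, Submodule.mem_orthogonal_singleton_iff_inner_right]
            exact b.orthonormal.2 (Ne.symm hi)
          rw [← Submodule.starProjection_apply, Submodule.starProjection_eq_self_iff.mpr hmem]
      rw [hAeq]
      rfl
  · -- backward direction
    rintro ⟨μ, hμ⟩
    have htrA' := part2 μ hμ
    have hAA : A ∘ₗ A = μ • A := by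
      refine LinearMap.ext fun w => ?_
      have hPmem : (Submodule.orthogonalProjectionOnto (ℝ ∙ v)ᗮ w : V) ∈ (ℝ ∙ v)ᗮ :=
        (Submodule.orthogonalProjectionOnto _ w).2
      rw [LinearMap.comp_apply, LinearMap.smul_apply, hμ w, map_smul, hμ _,
        ← Submodule.starProjection_apply _ (Submodule.orthogonalProjectionOnto (ℝ ∙ v)ᗮ w : V),
        Submodule.starProjection_eq_self_iff.mpr hPmem]
    have htrAA' : LinearMap.trace ℝ V (A ∘ₗ A) = μ * (μ * ((n : ℝ) - 1)) := by
      rw [hAA, map_smul, smul_eq_mul, htrA']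
    rw [htrA', htrAA']
    ring
end
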